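/- Let S be a bounded linear operator on the real Banach space ℓ¹ with matrix entries t_{ij} = (S f_j)_i. Suppose: (1) S is quasinilpotent (spectral radius 0); (2) S has no nontrivial closed invariant ideal; (3) the bounded operator S⁻ on ℓ¹ whose matrix entries are max(−t_{ij}, 0) is compact. Then the positive part S⁺, i.e. the bounded operator on ℓ¹ whose matrix entries are max(t_{ij}, 0), has a nontrivial closed invariant subspace. -/

import Mathlib

open Filter Topology

noncomputable section

abbrev E1 := lp (fun _ : ℕ => ℝ) 1

lemma coord_abs_le (x : E1) (i : ℕ) : |x i| ≤ ‖x‖ := by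
  simpa using lp.norm_apply_le_norm one_ne_zero x i

/-- coordinate functional -/
def coordL (i : ℕ) : E1 →L[ℝ] ℝ :=
  LinearMap.mkContinuous
    { toFun := fun x => x i
      map_add' := fun x y => by simp [lp.coeFn_add]
      map_smul' := fun c x => by simp [lp.coeFn_smul] }
    1 (fun x => by rw [one_mul, Real.norm_eq_abs]; exact coord_abs_le x i)

@[simp] lemma coordL_apply (i : ℕ) (x : E1) : coordL i x = x i := rfl

lemma e1_hasSum (x : E1) : HasSum (fun j => lp.single 1 j (x j)) x :=
  lp.hasSum_single (by norm_num) x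

lemma single_eq_smul (j : ℕ) (c : ℝ) : (lp.single 1 j c : E1) = c • (lp.single 1 j (1:ℝ) : E1) := by
  apply lp.ext
  funext k
  rw [lp.coeFn_smul]
  by_cases h : k = j
  · subst h; simp [lp.single_apply_self]
  · simp [lp.single_apply_ne _ _ _ h, Pi.single_apply, h]

/-- operators agreeing on basis vectors agree -/
lemma clm_ext {A B : E1 →L[ℝ] E1} (h : ∀ j, A (lp.single 1 j 1) = B (lp.single 1 j 1)) :
    A = B := by
  ext x : 1
  have hA : HasSum (fun j => A (lp.single 1 j (x j))) (A x) := (e1_hasSum x).mapL A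
  have hB : HasSum (fun j => B (lp.single 1 j (x j))) (B x) := (e1_hasSum x).mapL B
  have : (fun j => A (lp.single 1 j (x j))) = fun j => B (lp.single 1 j (x j)) := by
    funext j
    rw [single_eq_smul, map_smul, map_smul, h j]
  rw [this] at hA
  exact hA.unique hB

/-- coordinate expansion of `A x` -/
lemma coord_expand (A : E1 →L[ℝ] E1) (x : E1) (i : ℕ) :
    HasSum (fun j => x j * (A (lp.single 1 j 1) i)) ((A x) i) := by
  have hA : HasSum (fun j => A (lp.single 1 j (x j))) (A x) := (e1_hasSum x).mapL A
  have := hA.mapL (coordL i)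
  simp only [coordL_apply] at this
  have e : ∀ j, (A (lp.single 1 j (x j))) i = x j * (A (lp.single 1 j 1)) i := by
    intro j
    rw [single_eq_smul, map_smul, lp.coeFn_smul]
    simp
  simpa only [e] using this

lemma single_coord_nonneg (j i : ℕ) : 0 ≤ (lp.single 1 j (1:ℝ) : E1) i := by
  by_cases h : i = j
  · subst h; rw [lp.single_apply_self]; norm_num
  · rw [lp.single_apply_ne _ _ _ h]

lemma apply_nonneg_of_nonneg (T : E1 →L[ℝ] E1) (hT : ∀ i j, 0 ≤ T (lp.single 1 j 1) i)
    {x : E1} (hx : ∀ i, 0 ≤ x i) (i : ℕ) : 0 ≤ (T x) i :=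
  hasSum_le (fun j => mul_nonneg (hx j) (hT i j)) hasSum_zero (coord_expand T x i)

lemma coord_mul_le_apply (T : E1 →L[ℝ] E1) (hT : ∀ i j, 0 ≤ T (lp.single 1 j 1) i)
    {x : E1} (hx : ∀ i, 0 ≤ x i) (i j : ℕ) :
    x j * T (lp.single 1 j 1) i ≤ (T x) i :=
  le_hasSum (coord_expand T x i) j (fun k _ => mul_nonneg (hx k) (hT i k))

lemma pow_apply_nonneg (T : E1 →L[ℝ] E1) (hT : ∀ i j, 0 ≤ T (lp.single 1 j 1) i)
    {x : E1} (hx : ∀ i, 0 ≤ x i) (m : ℕ) (i : ℕ) : 0 ≤ ((T^m) x) i := by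
  induction m generalizing i with
  | zero => simpa using hx i
  | succ m ih =>
      have : T^(m+1) = T * T^m := pow_succ' T m
      rw [this]
      exact apply_nonneg_of_nonneg T hT (fun k => ih k) i

def idealSub (A : Set ℕ) : Submodule ℝ E1 where
  carrier := {x | ∀ i ∉ A, x i = 0}
  add_mem' := by
    intro a b ha hb i hi
    rw [lp.coeFn_add, Pi.add_apply, ha i hi, hb i hi, add_zero]
  zero_mem' := by intro i hi; rfl
  smul_mem' := by
    intro c x hx i hi
    rw [lp.coeFn_smul, Pi.smul_apply, hx i hi, smul_zero]

lemma mem_idealSub {A : Set ℕ} {x : E1} : x ∈ idealSub A ↔ ∀ i ∉ A, x i = 0 := Iff.rfl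

lemma idealSub_closed (A : Set ℕ) : IsClosed ((idealSub A : Submodule ℝ E1) : Set E1) := by
  have : ((idealSub A : Submodule ℝ E1) : Set E1)
      = ⋂ (i : ℕ) (_ : i ∉ A), (coordL i) ⁻¹' {0} := by
    ext x
    simp [mem_idealSub, Set.mem_iInter]
  rw [this]
  exact isClosed_iInter fun i => isClosed_iInter fun _ =>
    isClosed_singleton.preimage (coordL i).continuous

lemma single_ne_zero' (i : ℕ) : (lp.single 1 i (1:ℝ) : E1) ≠ 0 := by
  intro h
  have := congrArg (fun x : E1 => x i) h
  simp only [lp.single_apply_self] at this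
  exact one_ne_zero this

lemma exists_ideal_or_diag (T : E1 →L[ℝ] E1) (hT : ∀ i j, 0 ≤ T (lp.single 1 j 1) i) :
    (∃ J : Submodule ℝ E1, IsClosed (J : Set E1) ∧ J ≠ ⊥ ∧ J ≠ ⊤ ∧ ∀ x ∈ J, T x ∈ J)
    ∨ ∃ n : ℕ, 0 < ((T^(n+1)) (lp.single 1 0 1)) 0 := by
  set f0 : E1 := lp.single 1 0 1 with hf0
  have hf0nn : ∀ i, 0 ≤ f0 i := single_coord_nonneg 0
  by_cases hdiag : ∃ n : ℕ, 0 < ((T^(n+1)) f0) 0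
  · exact Or.inr hdiag
  push_neg at hdiag
  left
  by_cases hTf0 : ∃ i, 0 < (T f0) i
  · -- reachability set
    obtain ⟨i1, hi1⟩ := hTf0
    set A : Set ℕ := {i | ∃ N : ℕ, 0 < ((T^(N+1)) f0) i} with hA
    have h0A : 0 ∉ A := by
      rintro ⟨N, hN⟩
      exact absurd hN (not_lt.mpr (hdiag N))
    have hclosure : ∀ i j : ℕ, j ∈ A → 0 < T (lp.single 1 j 1) i → i ∈ A := by
      rintro i j ⟨N, hN⟩ ht
      refine ⟨N+1, ?_⟩
      have hxnn : ∀ k, 0 ≤ ((T^(N+1)) f0) k := pow_apply_nonneg T hT hf0nn (N+1)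
      have hle := coord_mul_le_apply T hT hxnn i j
      have hpow : (T^(N+2)) f0 = T ((T^(N+1)) f0) := by
        rw [pow_succ' T (N+1)]; rfl
      have : 0 < (T ((T^(N+1)) f0)) i :=
        lt_of_lt_of_le (mul_pos hN ht) hle
      rw [hpow]
      exact this
    refine ⟨idealSub A, idealSub_closed A, ?_, ?_, ?_⟩
    · rw [Submodule.ne_bot_iff]
      refine ⟨lp.single 1 i1 1, ?_, single_ne_zero' i1⟩
      intro i hi
      have hi1A : i1 ∈ A := ⟨0, by simpa using hi1⟩
      by_cases h : i = i1
      · exact absurd (h ▸ hi1A) hi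
      · exact lp.single_apply_ne _ _ _ h
    · intro h
      have : f0 ∈ idealSub A := h ▸ Submodule.mem_top
      have := this 0 h0A
      rw [hf0, lp.single_apply_self] at this
      exact one_ne_zero this
    · intro x hx
      intro i hi
      refine HasSum.unique (coord_expand T x i) ?_
      have hz : ∀ j, x j * T (lp.single 1 j 1) i = 0 := by
        intro j
        by_cases hxj : x j = 0
        · rw [hxj, zero_mul]
        by_cases htj : T (lp.single 1 j 1) i = 0
        · rw [htj, mul_zero]
        exfalso
        have hjA : j ∈ A := by
          by_contra hjA
          exact hxj (hx j hjA)
        exact hi (hclosure i j hjA (lt_of_le_of_ne (hT i j) (Ne.symm htj)))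
      have : (fun j => x j * T (lp.single 1 j 1) i) = fun _ => (0:ℝ) := funext hz
      rw [this]
      exact hasSum_zero
  · -- T f0 = 0; span of f0 is invariant
    push_neg at hTf0
    have hTf00 : T f0 = 0 := by
      apply lp.ext
      funext i
      have h1 : 0 ≤ (T f0) i := apply_nonneg_of_nonneg T hT hf0nn i
      have h2 := hTf0 i
      have : (T f0) i = 0 := le_antisymm h2 h1
      simpa using this
    refine ⟨idealSub {0}, idealSub_closed _, ?_, ?_, ?_⟩
    · rw [Submodule.ne_bot_iff]
      refine ⟨f0, ?_, single_ne_zero' 0⟩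
      intro i hi
      exact lp.single_apply_ne _ _ _ hi
    · intro h
      have : (lp.single 1 1 1 : E1) ∈ idealSub {0} := h ▸ Submodule.mem_top
      have := this 1 (by norm_num)
      rw [lp.single_apply_self] at this
      exact one_ne_zero this
    · intro x hx
      have hxeq : x = (x 0) • f0 := by
        apply lp.ext
        funext i
        rw [lp.coeFn_smul, Pi.smul_apply]
        by_cases h : i = 0
        · subst h; rw [hf0, lp.single_apply_self]; simp
        · rw [hx i h, hf0, lp.single_apply_ne _ _ _ h, smul_zero]
      rw [hxeq, map_smul, hTf00, smul_zero]
      exact Submodule.zero_mem _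

lemma abs_hasSum (x : E1) : HasSum (fun i => |x i|) ‖x‖ := by
  have := lp.hasSum_norm (p := 1) (by norm_num) x
  simpa using this

lemma norm_sum_of_nonneg (v : ℕ → E1) (s : Finset ℕ) (h : ∀ m ∈ s, ∀ i, 0 ≤ (v m) i) :
    ‖∑ m ∈ s, v m‖ = ∑ m ∈ s, ‖v m‖ := by
  have h1 : HasSum (fun i => |(∑ m ∈ s, v m : E1) i|) ‖∑ m ∈ s, v m‖ := abs_hasSum _
  have h2 : ∀ m ∈ s, HasSum (fun i => (v m) i) ‖v m‖ := by
    intro m hm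
    have := abs_hasSum (v m)
    have e : (fun i => |(v m) i|) = fun i => (v m) i := by
      funext i; exact abs_of_nonneg (h m hm i)
    rwa [e] at this
  have h3 : HasSum (fun i => ∑ m ∈ s, (v m) i) (∑ m ∈ s, ‖v m‖) := hasSum_sum h2
  have e2 : (fun i => |(∑ m ∈ s, v m : E1) i|) = fun i => ∑ m ∈ s, (v m) i := by
    funext i
    have hc : (∑ m ∈ s, v m : E1) i = ∑ m ∈ s, (v m) i := by
      rw [lp.coeFn_sum]; simp
    rw [hc]
    exact abs_of_nonneg (Finset.sum_nonneg fun m hm => h m hm i)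
  rw [e2] at h1
  exact h1.unique h3

lemma diag_pow_ge (T : E1 →L[ℝ] E1) (hT : ∀ i j, 0 ≤ T (lp.single 1 j 1) i) (n : ℕ) :
    ∀ k : ℕ, (((T^(n+1)) (lp.single 1 0 1)) 0)^k ≤ ((T^((n+1)*k)) (lp.single 1 0 1)) 0 := by
  have hf0nn : ∀ i, 0 ≤ (lp.single 1 0 1 : E1) i := single_coord_nonneg 0
  have hc0 : 0 ≤ ((T^(n+1)) (lp.single 1 0 1)) 0 := pow_apply_nonneg T hT hf0nn (n+1) 0
  intro k
  induction k with
  | zero => simp [lp.single_apply_self]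
  | succ k ih =>
      have hxnn : ∀ i, 0 ≤ ((T^((n+1)*k)) (lp.single 1 0 1)) i := pow_apply_nonneg T hT hf0nn _
      have hEnt : ∀ i j, 0 ≤ (T^(n+1)) (lp.single 1 j 1) i := fun i j =>
        pow_apply_nonneg T hT (single_coord_nonneg j) (n+1) i
      have key := coord_mul_le_apply (T^(n+1)) hEnt hxnn 0 0
      have hpoweq : (T^((n+1)*(k+1))) (lp.single 1 0 1)
          = (T^(n+1)) ((T^((n+1)*k)) (lp.single 1 0 1)) := by
        have h : (n+1)*(k+1) = (n+1) + (n+1)*k := by ring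
        rw [h, pow_add]
        rfl
      have h1 : (((T^(n+1)) (lp.single 1 0 1)) 0)^(k+1)
          ≤ ((T^((n+1)*k)) (lp.single 1 0 1)) 0 * ((T^(n+1)) (lp.single 1 0 1)) 0 := by
        rw [pow_succ]
        exact mul_le_mul_of_nonneg_right ih hc0
      refine h1.trans ?_
      rw [hpoweq]
      exact key

lemma norm_f0 : ‖(lp.single 1 0 1 : E1)‖ = 1 := by
  have := lp.norm_single (E := fun _ : ℕ => ℝ) (p := 1) (by norm_num) 0 (1:ℝ)
  simpa using this

/-- the sequence of norms of powers applied to the first basis vector -/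
def aSeq (T : E1 →L[ℝ] E1) (m : ℕ) : ℝ := ‖(T^m) (lp.single 1 0 1)‖

/-- partial sums of the formal resolvent series -/
def sSeq (T : E1 →L[ℝ] E1) (l : ℝ) (N : ℕ) : ℝ :=
  ∑ m ∈ Finset.range (N+1), (l⁻¹)^(m+1) * aSeq T m

lemma aSeq_def (T : E1 →L[ℝ] E1) (m : ℕ) : aSeq T m = ‖(T^m) (lp.single 1 0 1)‖ := rfl

lemma sSeq_def (T : E1 →L[ℝ] E1) (l : ℝ) (N : ℕ) :
    sSeq T l N = ∑ m ∈ Finset.range (N+1), (l⁻¹)^(m+1) * aSeq T m := rfl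

lemma aSeq_nonneg (T : E1 →L[ℝ] E1) (m : ℕ) : 0 ≤ aSeq T m := norm_nonneg _

lemma aSeq_zero (T : E1 →L[ℝ] E1) : aSeq T 0 = 1 := by
  rw [aSeq_def, pow_zero]
  exact norm_f0

lemma aSeq_le (T : E1 →L[ℝ] E1) (m : ℕ) : aSeq T m ≤ ‖T‖^m := by
  induction m with
  | zero => simp [aSeq_zero]
  | succ m ih =>
      have h1 : aSeq T (m+1) ≤ ‖T‖ * aSeq T m := by
        rw [aSeq_def, aSeq_def]
        have h : (T^(m+1)) (lp.single 1 0 1) = T ((T^m) (lp.single 1 0 1)) := by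
          rw [pow_succ' T m]; rfl
        rw [h]
        exact T.le_opNorm _
      calc aSeq T (m+1) ≤ ‖T‖ * aSeq T m := h1
        _ ≤ ‖T‖ * ‖T‖^m := mul_le_mul_of_nonneg_left ih (norm_nonneg T)
        _ = ‖T‖^(m+1) := by ring

lemma sSeq_succ (T : E1 →L[ℝ] E1) (l : ℝ) (N : ℕ) :
    sSeq T l (N+1) = sSeq T l N + (l⁻¹)^(N+2) * aSeq T (N+1) :=
  Finset.sum_range_succ _ _

lemma sSeq_term_nonneg (T : E1 →L[ℝ] E1) {l : ℝ} (hl : 0 < l) (m : ℕ) :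
    0 ≤ (l⁻¹)^(m+1) * aSeq T m :=
  mul_nonneg (pow_nonneg (inv_nonneg.mpr hl.le) _) (aSeq_nonneg T m)

lemma sSeq_mono (T : E1 →L[ℝ] E1) {l : ℝ} (hl : 0 < l) : Monotone (sSeq T l) := by
  apply monotone_nat_of_le_succ
  intro N
  rw [sSeq_succ]
  have := sSeq_term_nonneg T hl (N+1)
  linarith

lemma sSeq_lb (T : E1 →L[ℝ] E1) {l : ℝ} (hl : 0 < l) (N : ℕ) : l⁻¹ ≤ sSeq T l N := by
  have h0mem : 0 ∈ Finset.range (N+1) := Finset.mem_range.mpr (Nat.succ_pos N)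
  have h := Finset.single_le_sum (f := fun m => (l⁻¹)^(m+1) * aSeq T m)
    (fun m _ => sSeq_term_nonneg T hl m) h0mem
  rw [sSeq_def]
  calc l⁻¹ = (l⁻¹)^(0+1) * aSeq T 0 := by rw [aSeq_zero]; ring
    _ ≤ _ := h

set_option maxHeartbeats 2000000 in
lemma exists_approx_eigen (T : E1 →L[ℝ] E1) (hT : ∀ i j, 0 ≤ T (lp.single 1 j 1) i)
    (n : ℕ) (hc : 0 < ((T^(n+1)) (lp.single 1 0 1)) 0) :
    ∃ r : ℝ, 0 < r ∧ ∀ k : ℕ, 0 < k → ∃ y : E1, ‖y‖ = 1 ∧ ‖T y - r • y‖ ≤ 4 / k := by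
  classical
  have hf0nn : ∀ i, 0 ≤ (lp.single 1 0 1 : E1) i := single_coord_nonneg 0
  set c : ℝ := ((T^(n+1)) (lp.single 1 0 1)) 0 with hcdef
  have hc0 : 0 < c := hc
  have hgrow : ∀ k : ℕ, c^k ≤ aSeq T ((n+1)*k) := by
    intro k
    refine le_trans (diag_pow_ge T hT n k) ?_
    exact le_trans (le_abs_self _) (coord_abs_le _ 0)
  set D : Set ℝ := {l : ℝ | 0 < l ∧ Tendsto (sSeq T l) atTop atTop} with hD
  have hD_of : ∀ l : ℝ, 0 < l → (∀ b : ℝ, ∃ N, b ≤ sSeq T l N) → l ∈ D := by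
    intro l hl hb
    refine ⟨hl, tendsto_atTop_atTop_of_monotone' (sSeq_mono T hl) ?_⟩
    rintro ⟨b, hbub⟩
    obtain ⟨N, hN⟩ := hb (b+1)
    have := hbub (Set.mem_range_self N)
    linarith
  set ρ : ℝ := c ^ ((1:ℝ)/(n+1)) with hρ
  have hρ0 : 0 < ρ := Real.rpow_pos_of_pos hc0 _
  have hρpow : ρ^(n+1) = c := by
    rw [hρ, ← Real.rpow_natCast (c ^ ((1:ℝ)/(n+1))) (n+1), ← Real.rpow_mul hc0.le]
    push_cast
    rw [one_div_mul_cancel (by positivity), Real.rpow_one]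
  have hterm_diag : ∀ k : ℕ, ρ⁻¹ ≤ (ρ⁻¹)^((n+1)*k+1) * aSeq T ((n+1)*k) := by
    intro k
    have h1 : (ρ⁻¹)^((n+1)*k+1) * c^k = ρ⁻¹ := by
      rw [pow_succ]
      have h2 : (ρ⁻¹)^((n+1)*k) = (c⁻¹)^k := by
        rw [pow_mul, inv_pow, hρpow]
      rw [h2]
      field_simp
      rw [one_div, ← mul_pow, inv_mul_cancel₀ hc0.ne', one_pow]
    calc ρ⁻¹ = (ρ⁻¹)^((n+1)*k+1) * c^k := h1.symm
      _ ≤ (ρ⁻¹)^((n+1)*k+1) * aSeq T ((n+1)*k) :=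
          mul_le_mul_of_nonneg_left (hgrow k) (by positivity)
  have hρD : ρ ∈ D := by
    refine hD_of ρ hρ0 ?_
    intro b
    obtain ⟨K, hK⟩ := exists_nat_gt (b * ρ)
    refine ⟨(n+1)*K, ?_⟩
    have hsub : (Finset.range (K+1)).image (fun k => (n+1)*k) ⊆ Finset.range ((n+1)*K+1) := by
      intro m hm
      obtain ⟨k, hk, rfl⟩ := Finset.mem_image.mp hm
      have : k ≤ K := Nat.lt_succ_iff.mp (Finset.mem_range.mp hk)
      exact Finset.mem_range.mpr (Nat.lt_succ_iff.mpr (Nat.mul_le_mul_left _ this))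
    have heq : ∑ m ∈ (Finset.range (K+1)).image (fun k => (n+1)*k), (ρ⁻¹)^(m+1) * aSeq T m
        = ∑ k ∈ Finset.range (K+1), (ρ⁻¹)^((n+1)*k+1) * aSeq T ((n+1)*k) :=
      Finset.sum_image (fun x _ y _ h => Nat.eq_of_mul_eq_mul_left (Nat.succ_pos n) h)
    have h1 : ∑ k ∈ Finset.range (K+1), (ρ⁻¹)^((n+1)*k+1) * aSeq T ((n+1)*k)
        ≤ sSeq T ρ ((n+1)*K) := by
      rw [← heq, sSeq_def]
      exact Finset.sum_le_sum_of_subset_of_nonneg hsub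
        (fun m _ _ => sSeq_term_nonneg T hρ0 m)
    have h2 : (K+1 : ℝ) * ρ⁻¹ ≤ ∑ k ∈ Finset.range (K+1), (ρ⁻¹)^((n+1)*k+1) * aSeq T ((n+1)*k) := by
      have := Finset.card_nsmul_le_sum (Finset.range (K+1))
        (fun k => (ρ⁻¹)^((n+1)*k+1) * aSeq T ((n+1)*k)) ρ⁻¹ (fun k _ => hterm_diag k)
      simpa [nsmul_eq_mul] using this
    have h3 : b ≤ (K+1 : ℝ) * ρ⁻¹ := by
      have hbρ : b * ρ < K := hK
      have hb' : b = b * ρ * ρ⁻¹ := by field_simp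
      rw [hb']
      have hKK : (b*ρ) * ρ⁻¹ ≤ (K:ℝ) * ρ⁻¹ :=
        mul_le_mul_of_nonneg_right hbρ.le (by positivity)
      refine hKK.trans ?_
      have h5 : (K:ℝ) ≤ (K:ℝ)+1 := by linarith
      exact mul_le_mul_of_nonneg_right h5 (by positivity)
    linarith
  have hDbdd : BddAbove D := by
    refine ⟨‖T‖ + 1, ?_⟩
    intro l hl
    by_contra hlgt
    push_neg at hlgt
    have hl0 : 0 < l := hl.1
    have hq0 : 0 ≤ ‖T‖ * l⁻¹ := by positivity
    have hq1 : ‖T‖ * l⁻¹ < 1 := by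
      rw [mul_inv_lt_iff₀ hl0, one_mul]
      linarith [norm_nonneg T]
    have hbound : ∀ N, sSeq T l N ≤ l⁻¹ * (1-‖T‖ * l⁻¹)⁻¹ := by
      intro N
      have h1 : ∀ m : ℕ, (l⁻¹)^(m+1) * aSeq T m ≤ l⁻¹ * (‖T‖ * l⁻¹)^m := by
        intro m
        have ha : (l⁻¹)^(m+1) * aSeq T m ≤ (l⁻¹)^(m+1) * ‖T‖^m :=
          mul_le_mul_of_nonneg_left (aSeq_le T m) (by positivity)
        refine ha.trans (le_of_eq ?_)
        rw [mul_pow, pow_succ]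
        ring
      have h2 : sSeq T l N ≤ ∑ m ∈ Finset.range (N+1), l⁻¹ * (‖T‖ * l⁻¹)^m := by
        rw [sSeq_def]
        exact Finset.sum_le_sum (fun m _ => h1 m)
      have h4 : ∑ m ∈ Finset.range (N+1), (‖T‖ * l⁻¹)^m ≤ (1-‖T‖ * l⁻¹)⁻¹ :=
        ((summable_geometric_of_lt_one hq0 hq1).sum_le_tsum (Finset.range (N+1))
          (fun i _ => by positivity)).trans_eq
          (tsum_geometric_of_lt_one hq0 hq1)
      rw [← Finset.mul_sum] at h2
      refine h2.trans (mul_le_mul_of_nonneg_left h4 (by positivity))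
    obtain ⟨N, hN⟩ := (hl.2.eventually_ge_atTop (l⁻¹ * (1-‖T‖ * l⁻¹)⁻¹ + 1)).exists
    have := hbound N
    linarith
  set r : ℝ := sSup D with hrdef
  have hρr : ρ ≤ r := le_csSup hDbdd hρD
  have hr0 : 0 < r := lt_of_lt_of_le hρ0 hρr
  refine ⟨r, hr0, ?_⟩
  intro k hk
  have hk' : (0:ℝ) < k := by exact_mod_cast hk
  set δ : ℝ := min (1/k) (r/2) with hδdef
  have hδ0 : 0 < δ := lt_min (by positivity) (by positivity)
  have hδk : δ ≤ 1/k := min_le_left _ _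
  have hδr : δ ≤ r/2 := min_le_right _ _
  obtain ⟨l, hlD, hll⟩ := exists_lt_of_lt_csSup ⟨ρ, hρD⟩ (show r - δ < r by linarith)
  have hl0 : 0 < l := hlD.1
  have hlr : l ≤ r := le_csSup hDbdd hlD
  set ε : ℝ := 2*δ with hεdef
  have hε0 : 0 < ε := by positivity
  have hinfN : ∀ N₀ : ℕ, ∃ N, N₀ ≤ N ∧ (l⁻¹)^(N+1) * aSeq T (N+1) ≤ ε * sSeq T l N := by
    intro N₀
    by_contra hbad
    push_neg at hbad
    set q : ℝ := 1 + ε * l⁻¹ with hqdef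
    have hq1 : 1 < q := by
      rw [hqdef]
      nlinarith [inv_pos.mpr hl0, hε0]
    have hq0 : 0 < q := by linarith
    have hsp : 0 < sSeq T l N₀ := lt_of_lt_of_le (inv_pos.mpr hl0) (sSeq_lb T hl0 N₀)
    have hgrow2 : ∀ d : ℕ, sSeq T l N₀ * q^d ≤ sSeq T l (N₀ + d) := by
      intro d
      induction d with
      | zero => simp
      | succ d ih =>
          have hb := (hbad (N₀ + d) (Nat.le_add_right _ _)).le
          have hsd : 0 < sSeq T l (N₀+d) :=
            lt_of_lt_of_le (inv_pos.mpr hl0) (sSeq_lb T hl0 _)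
          have h3 : sSeq T l (N₀+d) * q ≤ sSeq T l (N₀+d+1) := by
            rw [sSeq_succ, hqdef]
            have hterm : (l⁻¹)^(N₀+d+2) * aSeq T (N₀+d+1)
                = l⁻¹ * ((l⁻¹)^(N₀+d+1) * aSeq T (N₀+d+1)) := by ring
            rw [hterm]
            have h5 : ε * sSeq T l (N₀+d) * l⁻¹
                ≤ ((l⁻¹)^(N₀+d+1) * aSeq T (N₀+d+1)) * l⁻¹ :=
              mul_le_mul_of_nonneg_right hb (inv_pos.mpr hl0).le
            nlinarith
          calc sSeq T l N₀ * q^(d+1) = (sSeq T l N₀ * q^d) * q := by ring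
            _ ≤ sSeq T l (N₀+d) * q := mul_le_mul_of_nonneg_right ih hq0.le
            _ ≤ sSeq T l (N₀ + (d+1)) := by
                have he : N₀ + (d+1) = N₀+d+1 := by ring
                rw [he]
                exact h3
    set μ : ℝ := l + ε with hμdef
    have hμ0 : 0 < μ := by positivity
    have hμl : μ = l * q := by
      rw [hμdef, hqdef]
      field_simp
    set K : ℝ := ε * sSeq T l N₀ * l^(N₀+1) with hKdef
    have hK0 : 0 < K := by positivity
    have hamu : ∀ d : ℕ, K * μ^d ≤ aSeq T (N₀+d+1) := by
      intro d
      have hb := (hbad (N₀+d) (Nat.le_add_right _ _)).le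
      have h1 : ε * (sSeq T l N₀ * q^d) ≤ ε * sSeq T l (N₀+d) :=
        mul_le_mul_of_nonneg_left (hgrow2 d) hε0.le
      have h3 : l^(N₀+d+1) * (ε * (sSeq T l N₀ * q^d))
          ≤ l^(N₀+d+1) * ((l⁻¹)^(N₀+d+1) * aSeq T (N₀+d+1)) :=
        mul_le_mul_of_nonneg_left (h1.trans hb) (by positivity)
      have h4 : l^(N₀+d+1) * ((l⁻¹)^(N₀+d+1) * aSeq T (N₀+d+1)) = aSeq T (N₀+d+1) := by
        rw [← mul_assoc, ← mul_pow]
        field_simp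
        rw [one_pow, one_mul]
      have h5 : l^(N₀+d+1) * (ε * (sSeq T l N₀ * q^d)) = K * μ^d := by
        rw [hKdef, hμl, mul_pow, pow_add, pow_one]
        ring
      rw [h4, h5] at h3
      exact h3
    have hμD : μ ∈ D := by
      refine hD_of μ hμ0 ?_
      intro b
      set c₀ : ℝ := K * (μ⁻¹)^(N₀+2) with hc₀
      have hc₀0 : 0 < c₀ := by positivity
      obtain ⟨M, hM⟩ := exists_nat_gt (b / c₀)
      refine ⟨N₀ + M + 1, ?_⟩
      have hterm2 : ∀ d : ℕ, c₀ ≤ (μ⁻¹)^(N₀+d+1+1) * aSeq T (N₀+d+1) := by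
        intro d
        have h1 : (μ⁻¹)^(N₀+d+1+1) * (K * μ^d) = c₀ := by
          rw [hc₀]
          have he : (μ⁻¹)^(N₀+d+1+1) = (μ⁻¹)^(N₀+2) * (μ⁻¹)^d := by
            rw [← pow_add]
            congr 1
            omega
          rw [he]
          have h2 : (μ⁻¹)^d * μ^d = 1 := by
            rw [← mul_pow]
            field_simp
            exact one_pow d
          calc (μ⁻¹)^(N₀+2) * (μ⁻¹)^d * (K * μ^d)
              = K * ((μ⁻¹)^(N₀+2)) * ((μ⁻¹)^d * μ^d) := by ring
            _ = K * (μ⁻¹)^(N₀+2) := by rw [h2]; ring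
        calc c₀ = (μ⁻¹)^(N₀+d+1+1) * (K * μ^d) := h1.symm
          _ ≤ (μ⁻¹)^(N₀+d+1+1) * aSeq T (N₀+d+1) :=
              mul_le_mul_of_nonneg_left (hamu d) (by positivity)
      have hsub : (Finset.range (M+1)).image (fun d => N₀+d+1) ⊆ Finset.range (N₀+M+1+1) := by
        intro m hm
        obtain ⟨d, hd, rfl⟩ := Finset.mem_image.mp hm
        have : d ≤ M := Nat.lt_succ_iff.mp (Finset.mem_range.mp hd)
        refine Finset.mem_range.mpr ?_
        omega
      have heq : ∑ m ∈ (Finset.range (M+1)).image (fun d => N₀+d+1), (μ⁻¹)^(m+1) * aSeq T m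
          = ∑ d ∈ Finset.range (M+1), (μ⁻¹)^(N₀+d+1+1) * aSeq T (N₀+d+1) :=
        Finset.sum_image (fun x _ y _ h => by omega)
      have h1 : ∑ d ∈ Finset.range (M+1), (μ⁻¹)^(N₀+d+1+1) * aSeq T (N₀+d+1)
          ≤ sSeq T μ (N₀+M+1) := by
        rw [← heq, sSeq_def]
        exact Finset.sum_le_sum_of_subset_of_nonneg hsub
          (fun m _ _ => sSeq_term_nonneg T hμ0 m)
      have h2 : (M+1 : ℝ) * c₀ ≤ ∑ d ∈ Finset.range (M+1), (μ⁻¹)^(N₀+d+1+1) * aSeq T (N₀+d+1) := by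
        have hcard := Finset.card_nsmul_le_sum (Finset.range (M+1))
          (fun d => (μ⁻¹)^(N₀+d+1+1) * aSeq T (N₀+d+1)) c₀
          (fun d _ => hterm2 d)
        simpa [nsmul_eq_mul] using hcard
      have h3 : b ≤ (M+1 : ℝ) * c₀ := by
        have hMb : b / c₀ < M := hM
        rw [div_lt_iff₀ hc₀0] at hMb
        nlinarith
      linarith
    have : μ ≤ r := le_csSup hDbdd hμD
    rw [hμdef, hεdef] at this
    linarith
  obtain ⟨N₁, hN₁⟩ := (hlD.2.eventually_ge_atTop (k : ℝ)).exists
  obtain ⟨N, hNN₁, hNres⟩ := hinfN N₁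
  have hsN : (k:ℝ) ≤ sSeq T l N := le_trans hN₁ (sSeq_mono T hl0 hNN₁)
  have hsNpos : 0 < sSeq T l N := lt_of_lt_of_le hk' hsN
  set x : E1 := ∑ m ∈ Finset.range (N+1), ((l⁻¹)^(m+1)) • ((T^m) (lp.single 1 0 1)) with hx
  have hvnn : ∀ m ∈ Finset.range (N+1), ∀ i,
      0 ≤ (((l⁻¹)^(m+1)) • ((T^m) (lp.single 1 0 1)) : E1) i := by
    intro m _ i
    rw [lp.coeFn_smul, Pi.smul_apply]
    exact smul_nonneg (by positivity) (pow_apply_nonneg T hT hf0nn m i)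
  have hxnorm : ‖x‖ = sSeq T l N := by
    rw [hx, norm_sum_of_nonneg _ _ hvnn, sSeq_def]
    refine Finset.sum_congr rfl ?_
    intro m _
    rw [norm_smul]
    simp only [Real.norm_eq_abs]
    rw [abs_of_nonneg (by positivity : (0:ℝ) ≤ (l⁻¹)^(m+1))]
    rfl
  have hxpos : 0 < ‖x‖ := by rw [hxnorm]; exact hsNpos
  set g : ℕ → E1 := fun m => ((l⁻¹)^m) • ((T^m) (lp.single 1 0 1)) with hg
  have hTx : T x = ∑ m ∈ Finset.range (N+1), g (m+1) := by
    rw [hx, map_sum]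
    refine Finset.sum_congr rfl ?_
    intro m _
    rw [map_smul, hg]
    have h : T ((T^m) (lp.single 1 0 1)) = (T^(m+1)) (lp.single 1 0 1) := by
      rw [pow_succ' T m]; rfl
    rw [h]
  have hlx : l • x = ∑ m ∈ Finset.range (N+1), g m := by
    rw [hx, Finset.smul_sum]
    refine Finset.sum_congr rfl ?_
    intro m _
    rw [smul_smul, hg]
    congr 1
    rw [pow_succ]
    field_simp
  have htel : T x - l • x = g (N+1) - g 0 := by
    rw [hTx, hlx, ← Finset.sum_sub_distrib]
    exact Finset.sum_range_sub g (N+1)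
  have hg0 : g 0 = lp.single 1 0 1 := by
    rw [hg]
    simp
  have hres : ‖T x - l • x‖ ≤ ε * sSeq T l N + 1 := by
    rw [htel, hg0]
    refine (norm_sub_le _ _).trans ?_
    have h1 : ‖g (N+1)‖ = (l⁻¹)^(N+1) * aSeq T (N+1) := by
      rw [hg, norm_smul]
      simp only [Real.norm_eq_abs]
      rw [abs_of_nonneg (by positivity : (0:ℝ) ≤ (l⁻¹)^(N+1))]
      rfl
    rw [h1, norm_f0]
    linarith
  refine ⟨‖x‖⁻¹ • x, ?_, ?_⟩
  · rw [norm_smul]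
    simp only [Real.norm_eq_abs, abs_of_nonneg (inv_nonneg.mpr hxpos.le)]
    field_simp
  · have hTy : T (‖x‖⁻¹ • x) - r • (‖x‖⁻¹ • x)
        = ‖x‖⁻¹ • (T x - l • x) + ((l - r) * ‖x‖⁻¹) • x := by
      rw [map_smul]
      module
    rw [hTy]
    refine (norm_add_le _ _).trans ?_
    rw [norm_smul, norm_smul]
    simp only [Real.norm_eq_abs, abs_of_nonneg (inv_nonneg.mpr hxpos.le)]
    have h1 : ‖x‖⁻¹ * ‖T x - l • x‖ ≤ ‖x‖⁻¹ * (ε * sSeq T l N + 1) :=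
      mul_le_mul_of_nonneg_left hres (by positivity)
    have h2 : |(l - r) * ‖x‖⁻¹| * ‖x‖ = |l - r| := by
      rw [abs_mul, abs_of_nonneg (inv_nonneg.mpr hxpos.le)]
      field_simp
    have h3 : |l - r| ≤ δ := by
      rw [abs_sub_comm, abs_of_nonneg (by linarith : (0:ℝ) ≤ r - l)]
      linarith
    have h4 : ‖x‖⁻¹ * (ε * sSeq T l N + 1) = ε + ‖x‖⁻¹ := by
      rw [hxnorm]
      field_simp
    have h5 : ‖x‖⁻¹ ≤ 1/k := by
      rw [hxnorm]
      rw [inv_le_comm₀ hsNpos (by positivity)]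
      calc (1/k : ℝ)⁻¹ = k := by field_simp
        _ ≤ sSeq T l N := hsN
    calc ‖x‖⁻¹ * ‖T x - l • x‖ + |(l - r) * ‖x‖⁻¹| * ‖x‖
        ≤ ‖x‖⁻¹ * (ε * sSeq T l N + 1) + |l - r| := by
          rw [h2]
          linarith
      _ = ε + ‖x‖⁻¹ + |l - r| := by rw [h4]
      _ ≤ 2*δ + 1/k + δ := by
          rw [hεdef] at h1 ⊢
          linarith
      _ ≤ 2*(1/k) + 1/k + 1/k := by linarith
      _ = 4/k := by ring


set_option maxHeartbeats 1000000 in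
set_option synthInstance.maxHeartbeats 200000 in
lemma left_inverse_of_quasinilpotent (S : E1 →L[ℝ] E1)
    (hq : Tendsto (fun n : ℕ => ‖S ^ n‖ ^ (1 / (n : ℝ))) atTop (nhds 0))
    {r : ℝ} (hr0 : 0 < r) :
    ∃ R : E1 →L[ℝ] E1, ∀ z, R ((r • (1 : E1 →L[ℝ] E1) - S) z) = z := by
  have h1 : ∀ᶠ m : ℕ in atTop, ‖S ^ m‖ ^ (1/(m:ℝ)) < min r 1 :=
    hq.eventually_lt_const (lt_min hr0 one_pos)
  obtain ⟨m, hm1, hm2⟩ := ((eventually_ge_atTop 1).and h1).exists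
  have hm0 : (m:ℝ) ≠ 0 := by
    have : 0 < m := hm1
    positivity
  have hSm : ‖S ^ m‖ < r ^ m := by
    have hb : (0:ℝ) ≤ ‖S ^ m‖ ^ (1/(m:ℝ)) := Real.rpow_nonneg (norm_nonneg _) _
    have h3 : (‖S ^ m‖ ^ (1/(m:ℝ)))^m < (min r 1)^m :=
      pow_lt_pow_left₀ hm2 hb (by omega)
    have h4 : (‖S ^ m‖ ^ (1/(m:ℝ)))^m = ‖S ^ m‖ := by
      rw [← Real.rpow_natCast (‖S ^ m‖ ^ (1/(m:ℝ))) m, ← Real.rpow_mul (norm_nonneg _),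
        one_div, inv_mul_cancel₀ hm0, Real.rpow_one]
    have h5 : (min r 1)^m ≤ r^m :=
      pow_le_pow_left₀ (le_min hr0.le zero_le_one) (min_le_left r 1) m
    rw [h4] at h3
    exact lt_of_lt_of_le h3 h5
  set u : E1 →L[ℝ] E1 := r⁻¹ • S with hu
  have hum : ‖u ^ m‖ < 1 := by
    rw [hu, smul_pow]
    refine lt_of_le_of_lt (ContinuousLinearMap.opNorm_smul_le _ _) ?_
    have he : ‖(r⁻¹)^m‖ = (r⁻¹)^m := by
      rw [Real.norm_eq_abs, abs_of_nonneg (by positivity)]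
    rw [he]
    have h6 : (r⁻¹)^m * ‖S^m‖ < (r⁻¹)^m * r^m :=
      mul_lt_mul_of_pos_left hSm (by positivity)
    have h7 : (r⁻¹)^m * r^m = 1 := by
      rw [← mul_pow]
      field_simp
      exact one_pow m
    rw [h7] at h6
    exact h6
  set G : E1 →L[ℝ] E1 := ∑ i ∈ Finset.range m, u ^ i with hG
  have hWinv : ((↑(Units.oneSub (u^m) hum)⁻¹ : E1 →L[ℝ] E1) * G) * (1 - u) = 1 := by
    have h2 : G * (1 - u) = 1 - u^m := by
      have h3 := geom_sum_mul u m
      have h8 : G * (1 - u) = -(G * (u - 1)) := by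
        noncomm_ring
      rw [h8, hG, h3, neg_sub]
    rw [mul_assoc, h2]
    exact (Units.oneSub (u^m) hum).inv_mul
  refine ⟨r⁻¹ • ((↑(Units.oneSub (u^m) hum)⁻¹ : E1 →L[ℝ] E1) * G), ?_⟩
  intro z
  have hfact : r • ((1 : E1 →L[ℝ] E1) - u) = r • (1 : E1 →L[ℝ] E1) - S := by
    rw [smul_sub, hu, smul_smul, mul_inv_cancel₀ hr0.ne', one_smul]
  have hmul : (r⁻¹ • ((↑(Units.oneSub (u^m) hum)⁻¹ : E1 →L[ℝ] E1) * G))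
      * (r • (1 : E1 →L[ℝ] E1) - S) = 1 := by
    rw [← hfact, smul_mul_assoc, mul_smul_comm, hWinv, smul_smul,
      inv_mul_cancel₀ hr0.ne', one_smul]
  have := congrArg (fun A : E1 →L[ℝ] E1 => A z) hmul
  simpa [ContinuousLinearMap.mul_apply] using this

set_option maxHeartbeats 1000000 in
set_option synthInstance.maxHeartbeats 200000 in
/-- If `S` is a quasinilpotent operator on `ℓ¹` with no nontrivial closed invariant
ideal and whose negative part `S⁻` is compact, then the positive part `S⁺` has a
nontrivial closed invariant subspace. -/
theorem positive_part_has_invariant_subspace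
    (S Sneg Spos : lp (fun _ : ℕ => ℝ) 1 →L[ℝ] lp (fun _ : ℕ => ℝ) 1)
    -- `S` is quasinilpotent
    (hq : Tendsto (fun n : ℕ => ‖S ^ n‖ ^ (1 / (n : ℝ))) atTop (nhds 0))
    -- `S` has no nontrivial closed invariant ideal
    (hni : ¬ ∃ J : Submodule ℝ (lp (fun _ : ℕ => ℝ) 1),
      IsClosed (J : Set (lp (fun _ : ℕ => ℝ) 1)) ∧ J ≠ ⊥ ∧ J ≠ ⊤ ∧
      (∀ x ∈ J, S x ∈ J) ∧
      (∀ x ∈ J, ∀ y : lp (fun _ : ℕ => ℝ) 1, (∀ i, |y i| ≤ |x i|) → y ∈ J))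
    -- `Sneg` is the negative part `S⁻`, and it is compact
    (hneg : ∀ i j : ℕ, Sneg (lp.single 1 j 1) i = max (-(S (lp.single 1 j 1) i)) 0)
    (hcpt : IsCompactOperator Sneg)
    -- `Spos` is the positive part `S⁺`
    (hpos : ∀ i j : ℕ, Spos (lp.single 1 j 1) i = max (S (lp.single 1 j 1) i) 0) :
    ∃ J : Submodule ℝ (lp (fun _ : ℕ => ℝ) 1),
      IsClosed (J : Set (lp (fun _ : ℕ => ℝ) 1)) ∧ J ≠ ⊥ ∧ J ≠ ⊤ ∧
      ∀ x ∈ J, Spos x ∈ J := by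
  by_contra hmain
  have hT : ∀ i j, 0 ≤ Spos (lp.single 1 j 1) i := fun i j => by
    rw [hpos]
    exact le_max_right _ _
  rcases exists_ideal_or_diag Spos hT with h | ⟨n, hc⟩
  · exact hmain h
  obtain ⟨r, hr0, happrox⟩ := exists_approx_eigen Spos hT n hc
  -- operator identity S + Sneg = Spos
  have hsum : S + Sneg = Spos := by
    apply clm_ext
    intro j
    apply lp.ext
    funext i
    rw [ContinuousLinearMap.add_apply, lp.coeFn_add, Pi.add_apply, hpos, hneg]
    rcases le_total (S (lp.single 1 j 1) i) 0 with h | h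
    · rw [max_eq_right h, max_eq_left (neg_nonneg.mpr h)]
      ring
    · rw [max_eq_left h, max_eq_right (neg_nonpos.mpr h)]
      ring
  obtain ⟨R, hR⟩ := left_inverse_of_quasinilpotent S hq hr0
  -- the approximate eigenvectors
  have hky : ∀ k : ℕ, ∃ y : E1, ‖y‖ = 1 ∧ ‖Spos y - r • y‖ ≤ 4/((k:ℝ)+1) := by
    intro k
    obtain ⟨y, h1, h2⟩ := happrox (k+1) (Nat.succ_pos k)
    refine ⟨y, h1, ?_⟩
    have : ((k+1 : ℕ) : ℝ) = (k:ℝ)+1 := by push_cast; ring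
    rwa [this] at h2
  choose y hy1 hy2 using hky
  have h4lim : Tendsto (fun k : ℕ => (4:ℝ) / (k+1)) atTop (𝓝 0) := by
    have := (tendsto_const_div_atTop_nhds_zero_nat (4:ℝ)).comp (tendsto_add_atTop_nat 1)
    have e : (fun k : ℕ => (4:ℝ) / (k+1)) = (fun k : ℕ => (4:ℝ)/(k:ℝ)) ∘ (fun a => a + 1) := by
      funext k
      simp [Function.comp]
    rw [e]
    exact this
  have hconv0 : Tendsto (fun k => Spos (y k) - r • (y k)) atTop (𝓝 0) := by
    rw [tendsto_zero_iff_norm_tendsto_zero]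
    exact squeeze_zero (fun k => norm_nonneg _) hy2 h4lim
  -- compactness
  obtain ⟨K, hK, hKmem⟩ := hcpt
  obtain ⟨η, hη0, hball⟩ := Metric.mem_nhds_iff.mp hKmem
  have hyK : ∀ k, Sneg ((η/2) • (y k)) ∈ K := by
    intro k
    apply hball
    rw [Metric.mem_ball, dist_eq_norm, sub_zero, norm_smul, hy1]
    rw [Real.norm_eq_abs, abs_of_nonneg (by positivity : (0:ℝ) ≤ η/2)]
    linarith
  obtain ⟨w, -, φ, hφ, hwconv⟩ := hK.tendsto_subseq hyK
  have hη2 : (η/2 : ℝ) ≠ 0 := by positivity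
  have hsneg : ∀ k, Sneg (y k) = (η/2)⁻¹ • (Sneg ((η/2) • (y k))) := by
    intro k
    rw [map_smul, smul_smul, inv_mul_cancel₀ hη2, one_smul]
  have hzconv : Tendsto (fun k => Sneg (y (φ k))) atTop (𝓝 ((η/2)⁻¹ • w)) := by
    have h1 := hwconv.const_smul ((η/2)⁻¹)
    have e : (fun k => Sneg (y (φ k))) =
        fun k => (η/2)⁻¹ • ((fun k => Sneg ((η/2) • (y k))) ∘ φ) k := by
      funext k
      simp only [Function.comp]
      exact hsneg (φ k)
    rw [e]
    exact h1
  -- identity to pass to the limit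
  have hexp : ∀ zz : E1, (r • (1 : E1 →L[ℝ] E1) - S) zz = -(Spos zz - r • zz) + Sneg zz := by
    intro zz
    rw [ContinuousLinearMap.sub_apply, ContinuousLinearMap.smul_apply,
      ContinuousLinearMap.one_apply]
    have hS : S zz + Sneg zz = Spos zz := by
      rw [← ContinuousLinearMap.add_apply, hsum]
    have h2 : S zz = Spos zz - Sneg zz := by
      rw [← hS]
      abel
    rw [h2]
    abel
  have hyR : ∀ k, y k = R (-(Spos (y k) - r • (y k)) + Sneg (y k)) := by
    intro k
    rw [← hexp, hR]
  -- limit vector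
  have hresid : Tendsto (fun k => Spos (y (φ k)) - r • (y (φ k))) atTop (𝓝 0) := by
    have := hconv0.comp hφ.tendsto_atTop
    exact this
  have harg : Tendsto (fun k => -(Spos (y (φ k)) - r • (y (φ k))) + Sneg (y (φ k)))
      atTop (𝓝 (-(0:E1) + (η/2)⁻¹ • w)) :=
    (hresid.neg).add hzconv
  have hyconv : Tendsto (fun k => y (φ k)) atTop (𝓝 (R (-(0:E1) + (η/2)⁻¹ • w))) := by
    have e : (fun k => y (φ k)) =
        fun k => R (-(Spos (y (φ k)) - r • (y (φ k))) + Sneg (y (φ k))) := by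
      funext k
      exact hyR (φ k)
    rw [e]
    exact (R.continuous.tendsto _).comp harg
  set v : E1 := R (-(0:E1) + (η/2)⁻¹ • w) with hv
  have hvnorm : ‖v‖ = 1 := by
    have h1 : Tendsto (fun k => ‖y (φ k)‖) atTop (𝓝 ‖v‖) := hyconv.norm
    have h2 : Tendsto (fun k : ℕ => (1:ℝ)) atTop (𝓝 ‖v‖) := by
      have e : (fun k : ℕ => ‖y (φ k)‖) = fun k : ℕ => (1:ℝ) := by
        funext k
        exact hy1 (φ k)
      rwa [e] at h1
    exact (tendsto_nhds_unique tendsto_const_nhds h2).symm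
  have hvev : Spos v = r • v := by
    have h2 : Tendsto (fun k => Spos (y (φ k)) - r • (y (φ k))) atTop (𝓝 (Spos v - r • v)) :=
      ((Spos.continuous.tendsto v).comp hyconv).sub (hyconv.const_smul r)
    have h3 := tendsto_nhds_unique h2 hresid
    have h4 : Spos v - r • v = 0 := h3
    rw [sub_eq_zero] at h4
    exact h4
  have hvne : v ≠ 0 := by
    intro h
    rw [h, norm_zero] at hvnorm
    norm_num at hvnorm
  refine hmain ⟨Submodule.span ℝ {v}, ?_, ?_, ?_, ?_⟩
  · exact (Submodule.span ℝ {v}).closed_of_finiteDimensional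
  · rw [Submodule.ne_bot_iff]
    exact ⟨v, Submodule.mem_span_singleton_self v, hvne⟩
  · intro htop
    have h0 : (lp.single 1 0 1 : E1) ∈ Submodule.span ℝ {v} := htop ▸ Submodule.mem_top
    have h1 : (lp.single 1 1 1 : E1) ∈ Submodule.span ℝ {v} := htop ▸ Submodule.mem_top
    obtain ⟨a, ha⟩ := Submodule.mem_span_singleton.mp h0
    obtain ⟨b, hb⟩ := Submodule.mem_span_singleton.mp h1
    have ha0 : a * v 0 = 1 := by
      have := congrArg (fun x : E1 => x 0) ha
      simp only [lp.coeFn_smul, Pi.smul_apply, smul_eq_mul, lp.single_apply_self] at this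
      exact this
    have ha1 : a * v 1 = 0 := by
      have := congrArg (fun x : E1 => x 1) ha
      simp only [lp.coeFn_smul, Pi.smul_apply, smul_eq_mul] at this
      rwa [lp.single_apply_ne _ _ _ (by norm_num : (1:ℕ) ≠ 0)] at this
    have hb1 : b * v 1 = 1 := by
      have := congrArg (fun x : E1 => x 1) hb
      simp only [lp.coeFn_smul, Pi.smul_apply, smul_eq_mul, lp.single_apply_self] at this
      exact this
    have hane : a ≠ 0 := by
      intro h
      rw [h, zero_mul] at ha0
      exact one_ne_zero ha0.symm
    have hv1 : v 1 = 0 := by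
      rcases mul_eq_zero.mp ha1 with h | h
      · exact absurd h hane
      · exact h
    rw [hv1, mul_zero] at hb1
    exact one_ne_zero hb1.symm
  · intro x hx
    obtain ⟨t, ht⟩ := Submodule.mem_span_singleton.mp hx
    rw [← ht, map_smul, hvev, smul_smul]
    exact Submodule.mem_span_singleton.mpr ⟨t * r, rfl⟩

end
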